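/- For coprime integers a, b ≥ 1, the polynomial (1 − X^a)(1 − X^b) divides (1 − X)(1 − X^{ab}) in ℤ[X], and the quotient polynomial Δ(X) = (1 − X)(1 − X^{ab}) / ((1 − X^a)(1 − X^b)) satisfies Δ(1) = 1. (Δ is the Alexander polynomial of the (a, b) torus knot, normalized by Δ(1) = 1.) -/
import Mathlib


open Polynomial Finset

private lemma geom_image (a b : ℕ) (hab : Nat.Coprime a b) :
    (Finset.range b).image (fun i => a * i % b) = Finset.range b := by
  rcases Nat.eq_zero_or_pos b with rfl | hb
  · simp
  have hinj : Set.InjOn (fun i => a * i % b) (Finset.range b) := by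
    intro i hi j hj hij
    simp only [Finset.mem_coe, Finset.mem_range] at hi hj
    have : i ≡ j [MOD b] :=
      Nat.ModEq.cancel_left_of_coprime (by rwa [Nat.coprime_comm] at hab) hij
    rwa [Nat.ModEq, Nat.mod_eq_of_lt hi, Nat.mod_eq_of_lt hj] at this
  apply Finset.eq_of_subset_of_card_le
  · intro x hx
    simp only [Finset.mem_image, Finset.mem_range] at hx ⊢
    obtain ⟨i, _, rfl⟩ := hx
    exact Nat.mod_lt _ hb
  · rw [Finset.card_image_of_injOn hinj]

private lemma geom_dvd (a b : ℕ) (hab : Nat.Coprime a b) :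
    (∑ i ∈ Finset.range b, (X : ℤ[X]) ^ i) ∣ ∑ i ∈ Finset.range b, (X : ℤ[X]) ^ (a * i) := by
  set S : ℤ[X] := ∑ i ∈ Finset.range b, X ^ i with hS
  have hSdvd : S ∣ X ^ b - 1 := ⟨X - 1, (geom_sum_mul X b).symm⟩
  have key : S ∣ (∑ i ∈ Finset.range b, (X : ℤ[X]) ^ (a * i))
      - ∑ i ∈ Finset.range b, (X : ℤ[X]) ^ (a * i % b) := by
    rw [← Finset.sum_sub_distrib]
    apply Finset.dvd_sum
    intro i _
    refine hSdvd.trans ?_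
    have hpow : (X : ℤ[X]) ^ (a * i) = X ^ (a * i % b) * (X ^ b) ^ (a * i / b) := by
      rw [← pow_mul, ← pow_add]
      congr 1
      exact (Nat.mod_add_div (a * i) b).symm
    rw [hpow]
    have h2 : (X ^ b - 1 : ℤ[X]) ∣ (X ^ b) ^ (a * i / b) - 1 := by
      simpa using sub_dvd_pow_sub_pow ((X : ℤ[X]) ^ b) 1 (a * i / b)
    obtain ⟨c, hc⟩ := h2
    exact ⟨X ^ (a * i % b) * c, by linear_combination (X : ℤ[X]) ^ (a * i % b) * hc⟩
  have heq : (∑ i ∈ Finset.range b, (X : ℤ[X]) ^ (a * i % b)) = S := by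
    have hinj : ∀ i ∈ Finset.range b, ∀ j ∈ Finset.range b, a * i % b = a * j % b → i = j := by
      intro i hi j hj hij
      have : i ≡ j [MOD b] :=
        Nat.ModEq.cancel_left_of_coprime (by rwa [Nat.coprime_comm] at hab) hij
      simp only [Finset.mem_range] at hi hj
      rwa [Nat.ModEq, Nat.mod_eq_of_lt hi, Nat.mod_eq_of_lt hj] at this
    calc (∑ i ∈ Finset.range b, (X : ℤ[X]) ^ (a * i % b))
        = ∑ j ∈ (Finset.range b).image (fun i => a * i % b), (X : ℤ[X]) ^ j :=
          (Finset.sum_image hinj).symm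
      _ = S := by rw [geom_image a b hab, hS]
  obtain ⟨c, hc⟩ := key
  exact ⟨c + 1, by rw [mul_add, ← hc, mul_one, heq]; ring⟩

private lemma geom_split (a b : ℕ) :
    (∑ i ∈ Finset.range (a * b), (X : ℤ[X]) ^ i)
      = (∑ i ∈ Finset.range a, (X : ℤ[X]) ^ i)
        * ∑ j ∈ Finset.range b, (X : ℤ[X]) ^ (a * j) := by
  have hX : (X - 1 : ℤ[X]) ≠ 0 := by
    intro h
    have := congrArg (Polynomial.eval 0) h
    simp at this
  apply mul_right_cancel₀ hX
  have h1 := geom_sum_mul (X : ℤ[X]) (a * b)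
  have h2 := geom_sum_mul (X : ℤ[X]) a
  have h3 := geom_sum_mul ((X : ℤ[X]) ^ a) b
  have h4 : (∑ j ∈ Finset.range b, (X : ℤ[X]) ^ (a * j))
      = ∑ j ∈ Finset.range b, ((X : ℤ[X]) ^ a) ^ j := by
    simp [pow_mul]
  have h5 : (X : ℤ[X]) ^ (a * b) = ((X : ℤ[X]) ^ a) ^ b := pow_mul X a b
  rw [h4]
  linear_combination h1 - (∑ j ∈ Finset.range b, ((X : ℤ[X]) ^ a) ^ j) * h2 - h3 + h5

/-- For coprime `a, b ≥ 1`, `(1 - X^a)(1 - X^b)` divides `(1 - X)(1 - X^(ab))` in `ℤ[X]`,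
and the quotient polynomial `Δ` (the Alexander polynomial of the `(a,b)` torus knot)
satisfies `Δ(1) = 1`. -/
theorem torusKnot_alexander (a b : ℕ) (ha : 1 ≤ a) (hb : 1 ≤ b) (hab : Nat.Coprime a b) :
    ((1 - X ^ a) * (1 - X ^ b) : ℤ[X]) ∣ (1 - X) * (1 - X ^ (a * b)) ∧
      ∀ Δ : ℤ[X],
        Δ * ((1 - X ^ a) * (1 - X ^ b)) = (1 - X) * (1 - X ^ (a * b)) → Δ.eval 1 = 1 := by
  have hsa := geom_sum_mul (X : ℤ[X]) a
  have hsb := geom_sum_mul (X : ℤ[X]) b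
  have hsab := geom_sum_mul (X : ℤ[X]) (a * b)
  constructor
  · obtain ⟨Q, hQ⟩ := geom_dvd a b hab
    refine ⟨Q, ?_⟩
    have hsplit := geom_split a b
    rw [hQ] at hsplit
    linear_combination (-(X - 1)) * hsab + (X - 1) ^ 2 * hsplit
      + Q * ((X : ℤ[X]) ^ b - 1) * hsa
      + (∑ i ∈ Finset.range a, (X : ℤ[X]) ^ i) * (X - 1) * Q * hsb
  · intro Δ hΔ
    have hX : (X - 1 : ℤ[X]) ≠ 0 := by
      intro h
      have := congrArg (Polynomial.eval 0) h
      simp at this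
    have key : Δ * ((∑ i ∈ Finset.range a, (X:ℤ[X]) ^ i) * ∑ i ∈ Finset.range b, (X:ℤ[X]) ^ i)
        = ∑ i ∈ Finset.range (a * b), (X:ℤ[X]) ^ i := by
      apply mul_right_cancel₀ (pow_ne_zero 2 hX)
      linear_combination hΔ + Δ * (∑ i ∈ Finset.range b, (X:ℤ[X]) ^ i) * (X - 1) * hsa
        + Δ * ((X : ℤ[X]) ^ a - 1) * hsb - (X - 1) * hsab
    have h1 := congrArg (Polynomial.eval 1) key
    simp only [eval_mul, eval_finset_sum, eval_pow, eval_X, one_pow] at h1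
    simp only [Finset.sum_const, Finset.card_range, nsmul_eq_mul, mul_one] at h1
    have hab0 : (a : ℤ) * b ≠ 0 := by positivity
    have h2 : Δ.eval 1 * ((a : ℤ) * b) = (a : ℤ) * b := by push_cast at h1 ⊢; linarith
    exact mul_right_cancel₀ hab0 (by rw [h2, one_mul])
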